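/- Let d ≥ 2, m ≥ 1, D = Δ^d × ℝ_+^m ⊆ ℝ^{d+m}, I = {1,…,d}, J = {d+1,…,d+m}. Let c : ℝ^{d+m} → S^{d+m} be a symmetric-matrix-valued map such that for all k ≠ l one has c_{kl}(x) = −γ_{kl} x_k x_l for some real numbers γ_{kl} = γ_{lk}, for each i ∈ I one has c_{ii}(x) = Σ_{k∈I, k≠i} γ_{ik} x_i x_k, and for each j ∈ J one has c_{jj}(x) = α_{jj} x_j² + x_j (φ_j + θ_{(j)}^⊤ x_I + π_{(j)}^⊤ x_J) for some α_{jj}, φ_j ∈ ℝ, θ_{(j)} ∈ ℝ^d, π_{(j)} ∈ ℝ^m. If c(x) is positive semidefinite for every x ∈ D, then γ_{ij} = 0 for every i ∈ I and j ∈ J. -/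

import Mathlib

open Matrix Finset

/-- for a symmetric matrix map `c` of the given parametric form, positive
semidefiniteness of `c(x)` on `D = Δ^d × ℝ_+^m` forces `γ_{ij} = 0` for all `i ∈ I`,
`j ∈ J`. Coordinates are indexed by `Fin d ⊕ Fin m` (`Sum.inl` is `I`, `Sum.inr` is `J`). -/
theorem statement4 (d m : ℕ) (hd : 2 ≤ d) (hm : 1 ≤ m)
    (D : Set ((Fin d ⊕ Fin m) → ℝ))
    (hD : D = {x | (∀ k, 0 ≤ x k) ∧ (∀ i : Fin d, x (Sum.inl i) ≤ 1) ∧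
        (∑ i : Fin d, x (Sum.inl i)) = 1})
    (γ : (Fin d ⊕ Fin m) → (Fin d ⊕ Fin m) → ℝ)
    (hγsymm : ∀ k l, γ k l = γ l k)
    (α : Fin m → ℝ) (φ : Fin m → ℝ) (θ : Fin m → Fin d → ℝ) (π : Fin m → Fin m → ℝ)
    (c : ((Fin d ⊕ Fin m) → ℝ) → Matrix (Fin d ⊕ Fin m) (Fin d ⊕ Fin m) ℝ)
    (hsymm : ∀ x, (c x).IsSymm)
    (hcoff : ∀ x (k l : Fin d ⊕ Fin m), k ≠ l → c x k l = -(γ k l * x k * x l))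
    (hcI : ∀ x (i : Fin d),
      c x (Sum.inl i) (Sum.inl i) =
        ∑ k ∈ Finset.univ.erase i, γ (Sum.inl i) (Sum.inl k) * x (Sum.inl i) * x (Sum.inl k))
    (hcJ : ∀ x (j : Fin m),
      c x (Sum.inr j) (Sum.inr j) =
        α j * (x (Sum.inr j)) ^ 2 +
          x (Sum.inr j) * (φ j + (∑ i : Fin d, θ j i * x (Sum.inl i)) +
            (∑ k : Fin m, π j k * x (Sum.inr k))))
    (hPSD : ∀ x ∈ D, (c x).PosSemidef) :
    ∀ (i : Fin d) (j : Fin m), γ (Sum.inl i) (Sum.inr j) = 0 := by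
  intro i j
  set x : (Fin d ⊕ Fin m) → ℝ :=
    Sum.elim (fun k => if k = i then 1 else 0) (fun l => if l = j then 1 else 0) with hx
  have hxD : x ∈ D := by
    rw [hD]
    refine ⟨?_, ?_, ?_⟩
    · intro k; rcases k with k | k <;> simp only [hx, Sum.elim_inl, Sum.elim_inr] <;>
        split <;> norm_num
    · intro k; simp only [hx, Sum.elim_inl]; split <;> norm_num
    · simp [hx]
  have hps := hPSD x hxD
  have hxi : x (Sum.inl i) = 1 := by simp [hx]
  have hxj : x (Sum.inr j) = 1 := by simp [hx]
  have hii : c x (Sum.inl i) (Sum.inl i) = 0 := by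
    rw [hcI]
    apply Finset.sum_eq_zero
    intro k hk
    have hk' : x (Sum.inl k) = 0 := by
      simp [hx, (Finset.mem_erase.mp hk).1]
    simp [hk']
  have hij : c x (Sum.inl i) (Sum.inr j) = -(γ (Sum.inl i) (Sum.inr j)) := by
    rw [hcoff x _ _ (by simp), hxi, hxj]; ring
  have hji : c x (Sum.inr j) (Sum.inl i) = c x (Sum.inl i) (Sum.inr j) := by
    have := (hsymm x).apply (Sum.inl i) (Sum.inr j)
    simpa using this
  set C := c x (Sum.inr j) (Sum.inr j) with hC
  have key : ∀ t : ℝ, 0 ≤ 2 * t * c x (Sum.inl i) (Sum.inr j) + C := by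
    intro t
    have h := hps.dotProduct_mulVec_nonneg (t • (Pi.single (Sum.inl i) 1 : (Fin d ⊕ Fin m) → ℝ) +
      (Pi.single (Sum.inr j) 1 : (Fin d ⊕ Fin m) → ℝ))
    rw [star_trivial, mulVec_add, mulVec_smul] at h
    simp only [mulVec_single, mul_one, add_dotProduct, smul_dotProduct,
      dotProduct_add, dotProduct_smul, single_dotProduct, one_mul, smul_eq_mul, col_apply, op_smul_eq_mul] at h
    rw [hii, hji] at h
    linarith
  by_contra hg
  have hg' : c x (Sum.inl i) (Sum.inr j) ≠ 0 := by rw [hij]; simpa using hg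
  set g := c x (Sum.inl i) (Sum.inr j) with hgdef
  have := key ((-C - 1) / (2 * g))
  have h2 : 2 * ((-C - 1) / (2 * g)) * g + C = -1 := by
    field_simp
    ring
  rw [h2] at this
  linarith
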